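/- Let G be a finite group, g ∈ G', and for n ≥ 2 let Pr_gⁿ(G) = |{(g₁,…,g_n) ∈ Gⁿ : g₁⋯g_n g₁⁻¹⋯g_n⁻¹ = g}|/|G|ⁿ. Then Pr_gⁿ(G) ≤ Pr₁ⁿ(G), with equality if and only if g = 1. -/

import Mathlib

/-- The probability that a random `n`-tuple `(g₁, …, gₙ)` of elements of `G` satisfies
`g₁ g₂ ⋯ gₙ g₁⁻¹ g₂⁻¹ ⋯ gₙ⁻¹ = g`. -/
noncomputable def prWord (G : Type*) [Group G] (n : ℕ) (g : G) : ℚ :=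
  (Nat.card {t : Fin n → G // (List.ofFn t).prod * (List.ofFn fun i => (t i)⁻¹).prod = g} : ℚ) / (Nat.card G) ^ n


open Finset

namespace PrWordAux

open scoped Classical

variable {G : Type*} [Group G] [Fintype G]

/-- product of the tuple -/
noncomputable def Pf {m : ℕ} (t : Fin m → G) : G := (List.ofFn t).prod
/-- product of the inverses (in the same order) -/
noncomputable def Qf {m : ℕ} (t : Fin m → G) : G := (List.ofFn fun i => (t i)⁻¹).prod

/-- number of solutions of `t₁⋯tₘ t₁⁻¹⋯tₘ⁻¹ = g`, as a rational number -/
noncomputable def Nw (m : ℕ) (g : G) : ℚ :=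
  ∑ t : Fin m → G, if Pf t * Qf t = g then 1 else 0

/-- number of tuples with `∏ tᵢ = A` and `∏ tᵢ⁻¹ = B` -/
noncomputable def cc (m : ℕ) (A B : G) : ℚ :=
  ∑ t : Fin m → G, if Pf t = A ∧ Qf t = B then 1 else 0

lemma Pf_cons {m : ℕ} (x : G) (s : Fin m → G) : Pf (Fin.cons x s) = x * Pf s := by
  simp [Pf, List.ofFn_succ]

lemma Qf_cons {m : ℕ} (x : G) (s : Fin m → G) : Qf (Fin.cons x s) = x⁻¹ * Qf s := by
  simp [Qf, List.ofFn_succ]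

lemma Pf_zero (t : Fin 0 → G) : Pf t = 1 := by simp [Pf]
lemma Qf_zero (t : Fin 0 → G) : Qf t = 1 := by simp [Qf]

lemma sum_cons (m : ℕ) (F : (Fin (m+1) → G) → ℚ) :
    ∑ t : Fin (m+1) → G, F t = ∑ x : G, ∑ s : Fin m → G, F (Fin.cons x s) := by
  rw [← Equiv.sum_comp (Fin.consEquiv (fun _ => G)) F, Fintype.sum_prod_type]
  rfl

lemma sum_fin_zero (F : (Fin 0 → G) → ℚ) : ∑ t : Fin 0 → G, F t = F (fun i => i.elim0) := by
  rw [Fintype.sum_eq_single (fun i => i.elim0)]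
  intro t ht
  exact absurd (funext fun i => i.elim0) ht
set_option linter.unusedSectionVars false

lemma sum_mulLeft (z : G) (f : G → ℚ) : ∑ x : G, f (z * x) = ∑ x : G, f x :=
  Equiv.sum_comp (Equiv.mulLeft z) f

lemma sum_mulRight (z : G) (f : G → ℚ) : ∑ x : G, f (x * z) = ∑ x : G, f x :=
  Equiv.sum_comp (Equiv.mulRight z) f

lemma sum_conj (z : G) (f : G → ℚ) : ∑ x : G, f (z * x * z⁻¹) = ∑ x : G, f x := by
  simpa using Equiv.sum_comp (MulAut.conj z).toEquiv f

/-- one-step recursion for `cc` -/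
lemma cc_succ (m : ℕ) (A B : G) : cc (m+1) A B = ∑ x : G, cc m (x⁻¹ * A) (x * B) := by
  unfold cc
  rw [sum_cons]
  refine sum_congr rfl fun x _ => sum_congr rfl fun s _ => ?_
  rw [Pf_cons, Qf_cons]
  refine if_congr ?_ rfl rfl
  constructor
  · rintro ⟨h1, h2⟩
    exact ⟨by rw [← h1, inv_mul_cancel_left], by rw [← h2, mul_inv_cancel_left]⟩
  · rintro ⟨h1, h2⟩
    exact ⟨by rw [h1, mul_inv_cancel_left], by rw [h2, inv_mul_cancel_left]⟩

/-- two-step recursion for `cc` -/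
lemma cc_succ2 (m : ℕ) (A B : G) :
    cc (m+2) A B = ∑ p : G, ∑ y : G, cc m (p⁻¹ * A) (y * p * y⁻¹ * B) := by
  rw [cc_succ]
  have h1 : ∀ x : G, cc (m+1) (x⁻¹ * A) (x * B) = ∑ y : G, cc m (y⁻¹ * (x⁻¹ * A)) (y * (x * B)) :=
    fun x => cc_succ m _ _
  simp only [h1]
  conv_lhs => rw [Finset.sum_comm]
  conv_rhs => rw [Finset.sum_comm]
  refine sum_congr rfl fun y _ => ?_
  rw [← sum_mulRight y (fun p => cc m (p⁻¹ * A) (y * p * y⁻¹ * B))]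
  refine sum_congr rfl fun x _ => ?_
  congr 1
  · group
  · group

/-- swapping the two arguments of `cc` (inverse each entry of the tuple) -/
lemma cc_swap (m : ℕ) (A B : G) : cc m A B = cc m B A := by
  unfold cc
  refine Fintype.sum_equiv
    ⟨fun t i => (t i)⁻¹, fun t i => (t i)⁻¹, fun t => by funext i; simp,
      fun t => by funext i; simp⟩ _ _ fun t => ?_
  simp only [Equiv.coe_fn_mk]
  refine if_congr ?_ rfl rfl
  have hP : Pf (fun i => (t i)⁻¹) = Qf t := rfl
  have hQ : Qf (fun i => (t i)⁻¹) = Pf t := by simp [Pf, Qf]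
  rw [hP, hQ]
  exact and_comm

lemma cc_zero (A B : G) : cc 0 A B = if 1 = A ∧ 1 = B then 1 else 0 := by
  unfold cc
  rw [sum_fin_zero]
  rw [Pf_zero, Qf_zero]

/-- conjugation invariance in the second argument, for tuples of even length -/
lemma cc_conj (j : ℕ) : ∀ A B z : G, cc (2*j) A (z * B * z⁻¹) = cc (2*j) A B := by
  induction j with
  | zero =>
    intro A B z
    rw [show 2*0 = 0 from rfl, cc_zero, cc_zero]
    refine if_congr (and_congr_right fun _ => ?_) rfl rfl
    constructor
    · intro h
      have : z * B * z⁻¹ = 1 := h.symm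
      have : B = 1 := by
        have := congrArg (fun w => z⁻¹ * w * z) this
        simpa [mul_assoc] using this
      rw [this]
    · intro h; rw [← h]; group
  | succ j ih =>
    intro A B z
    rw [show 2*(j+1) = 2*j+2 by ring, cc_succ2, cc_succ2]
    refine sum_congr rfl fun p _ => ?_
    have step : ∀ y : G, cc (2*j) (p⁻¹ * A) (y * p * y⁻¹ * (z * B * z⁻¹))
        = cc (2*j) (p⁻¹ * A) ((z⁻¹ * y) * p * (z⁻¹ * y)⁻¹ * B) := by
      intro y
      have harg : y * p * y⁻¹ * (z * B * z⁻¹)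
          = z * ((z⁻¹ * y) * p * (z⁻¹ * y)⁻¹ * B) * z⁻¹ := by group
      rw [harg, ih]
    simp only [step]
    exact sum_mulLeft z⁻¹ (fun y => cc (2*j) (p⁻¹ * A) (y * p * y⁻¹ * B))

/-- conjugation invariance in the first argument -/
lemma cc_conj_left (j : ℕ) (A B z : G) : cc (2*j) (z * A * z⁻¹) B = cc (2*j) A B := by
  rw [cc_swap, cc_conj, cc_swap]

/-- decomposing a sum over tuples according to the values of `Pf` and `Qf` -/
lemma sum_pf_qf (m : ℕ) (F : G → G → ℚ) :
    ∑ t : Fin m → G, F (Pf t) (Qf t) = ∑ A : G, ∑ B : G, cc m A B * F A B := by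
  have key : ∀ t : Fin m → G,
      F (Pf t) (Qf t) = ∑ A : G, ∑ B : G, if Pf t = A ∧ Qf t = B then F A B else 0 := by
    intro t
    simp [ite_and, Finset.sum_ite_eq, mem_univ]
  simp only [key]
  rw [Finset.sum_comm]
  refine sum_congr rfl fun A _ => ?_
  rw [Finset.sum_comm]
  refine sum_congr rfl fun B _ => ?_
  unfold cc
  rw [Finset.sum_mul]
  refine sum_congr rfl fun t _ => ?_
  by_cases h : Pf t = A ∧ Qf t = B <;> simp [h]

lemma Nw_eq (m : ℕ) (g : G) :
    Nw m g = ∑ A : G, ∑ B : G, cc m A B * (if A * B = g then 1 else 0) := by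
  unfold Nw
  exact sum_pf_qf m (fun A B => if A * B = g then 1 else 0)

/-- the commutator-count function -/
noncomputable def K2 (u : G) : ℚ := ∑ x : G, ∑ y : G, if x*y*x⁻¹*y⁻¹ = u then 1 else 0

lemma Nw_two (u : G) : Nw 2 u = K2 u := by
  unfold Nw K2
  rw [sum_cons]
  refine sum_congr rfl fun x _ => ?_
  rw [sum_cons]
  refine sum_congr rfl fun y _ => ?_
  rw [sum_fin_zero]
  rw [Pf_cons, Pf_cons, Qf_cons, Qf_cons, Pf_zero, Qf_zero]
  refine if_congr ?_ rfl rfl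
  constructor
  · intro h; rw [← h]; group
  · intro h; rw [← h]; group

/-- odd-length recursion: one free variable comes out -/
lemma Nw_odd (j : ℕ) (g : G) : Nw (2*j+1) g = (Fintype.card G : ℚ) * Nw (2*j) g := by
  unfold Nw
  rw [sum_cons]
  have inner : ∀ x : G,
      (∑ s : Fin (2*j) → G, if Pf (Fin.cons x s) * Qf (Fin.cons x s) = g then (1:ℚ) else 0)
        = ∑ A : G, ∑ B : G, cc (2*j) A B * (if A * B = g then (1:ℚ) else 0) := by
    intro x
    have e1 : (∑ s : Fin (2*j) → G, if Pf (Fin.cons x s) * Qf (Fin.cons x s) = g then (1:ℚ) else 0)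
        = ∑ s : Fin (2*j) → G, if (x * Pf s) * (x⁻¹ * Qf s) = g then (1:ℚ) else 0 := by
      refine sum_congr rfl fun s _ => ?_
      rw [Pf_cons, Qf_cons]
    rw [e1, sum_pf_qf (2*j) (fun A B => if (x * A) * (x⁻¹ * B) = g then 1 else 0)]
    rw [← sum_conj x⁻¹
      (fun A => ∑ B : G, cc (2*j) A B * (if (x * A) * (x⁻¹ * B) = g then (1:ℚ) else 0))]
    refine sum_congr rfl fun A _ => ?_
    refine sum_congr rfl fun B _ => ?_
    rw [cc_conj_left]
    have harg : (x * (x⁻¹ * A * x⁻¹⁻¹)) * (x⁻¹ * B) = A * B := by group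
    rw [harg]
  simp only [inner]
  rw [Finset.sum_const, card_univ, nsmul_eq_mul, ← Nw_eq]
  rfl

/-- move the innermost of three sums to the front -/
lemma sum_comm3 (S : G → G → G → ℚ) :
    (∑ y : G, ∑ a : G, ∑ b : G, S y a b) = ∑ a : G, ∑ b : G, ∑ y : G, S y a b := by
  rw [Finset.sum_comm]
  exact sum_congr rfl fun a _ => Finset.sum_comm

/-- even-length recursion: convolving with the commutator count -/
lemma Nw_even_succ (j : ℕ) (g : G) :
    Nw (2*j+2) g = ∑ h : G, Nw (2*j) h * K2 (h⁻¹ * g) := by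
  -- left-hand side as a quadruple sum
  have L1 : Nw (2*j+2) g
      = ∑ x : G, ∑ y : G, ∑ A : G, ∑ B : G,
          cc (2*j) A B * (if (x * (y * A)) * (x⁻¹ * (y⁻¹ * B)) = g then (1:ℚ) else 0) := by
    unfold Nw
    rw [sum_cons]
    refine sum_congr rfl fun x _ => ?_
    rw [sum_cons]
    refine sum_congr rfl fun y _ => ?_
    have e1 : (∑ s : Fin (2*j) → G,
        if Pf (Fin.cons x (Fin.cons y s)) * Qf (Fin.cons x (Fin.cons y s)) = g then (1:ℚ) else 0)
        = ∑ s : Fin (2*j) → G, if (x * (y * Pf s)) * (x⁻¹ * (y⁻¹ * Qf s)) = g then (1:ℚ) else 0 := by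
      refine sum_congr rfl fun s _ => ?_
      rw [Pf_cons, Pf_cons, Qf_cons, Qf_cons]
    rw [e1, sum_pf_qf (2*j) (fun A B => if (x * (y * A)) * (x⁻¹ * (y⁻¹ * B)) = g then 1 else 0)]
  -- straighten the condition: the word becomes A * B * [x,y]
  have L2 : ∀ x y : G,
      (∑ A : G, ∑ B : G,
          cc (2*j) A B * (if (x * (y * A)) * (x⁻¹ * (y⁻¹ * B)) = g then (1:ℚ) else 0))
      = ∑ A : G, ∑ B : G,
          cc (2*j) A B * (if A * B * (x*y*x⁻¹*y⁻¹) = g then (1:ℚ) else 0) := by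
    intro x y
    rw [← sum_conj (x*y)⁻¹
      (fun A => ∑ B : G, cc (2*j) A B * (if (x * (y * A)) * (x⁻¹ * (y⁻¹ * B)) = g then (1:ℚ) else 0))]
    refine sum_congr rfl fun A _ => ?_
    rw [← sum_conj (x*y*x⁻¹*y⁻¹)⁻¹
      (fun B => cc (2*j) ((x*y)⁻¹ * A * (x*y)⁻¹⁻¹) B *
        (if (x * (y * ((x*y)⁻¹ * A * (x*y)⁻¹⁻¹))) * (x⁻¹ * (y⁻¹ * B)) = g then (1:ℚ) else 0))]
    refine sum_congr rfl fun B _ => ?_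
    rw [cc_conj_left, cc_conj]
    have harg : (x * (y * ((x*y)⁻¹ * A * (x*y)⁻¹⁻¹))) *
        (x⁻¹ * (y⁻¹ * ((x*y*x⁻¹*y⁻¹)⁻¹ * B * (x*y*x⁻¹*y⁻¹)⁻¹⁻¹))) = A * B * (x*y*x⁻¹*y⁻¹) := by
      group
    rw [harg]
  simp only [L2] at L1
  -- right-hand side as the same quadruple sum
  have R1 : (∑ h : G, Nw (2*j) h * K2 (h⁻¹ * g))
      = ∑ A : G, ∑ B : G,
          cc (2*j) A B * (∑ x : G, ∑ y : G, if x*y*x⁻¹*y⁻¹ = (A*B)⁻¹ * g then (1:ℚ) else 0) := by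
    have e2 : ∀ h : G, Nw (2*j) h * K2 (h⁻¹ * g)
        = ∑ A : G, ∑ B : G, cc (2*j) A B * (if A * B = h then (1:ℚ) else 0) * K2 (h⁻¹ * g) := by
      intro h
      rw [Nw_eq, Finset.sum_mul]
      exact sum_congr rfl fun A _ => by rw [Finset.sum_mul]
    simp only [e2]
    rw [sum_comm3 (fun h A B => (cc (2*j) A B * if A * B = h then (1:ℚ) else 0) * K2 (h⁻¹ * g))]
    refine sum_congr rfl fun A _ => ?_
    refine sum_congr rfl fun B _ => ?_
    have e3 : ∀ h : G, (cc (2*j) A B * if A * B = h then (1:ℚ) else 0) * K2 (h⁻¹ * g)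
        = if A * B = h then cc (2*j) A B * K2 (h⁻¹ * g) else 0 := by
      intro h
      by_cases hh : A * B = h <;> simp [hh]
    simp only [e3]
    rw [Finset.sum_ite_eq univ (A*B) (fun h => cc (2*j) A B * K2 (h⁻¹ * g))]
    simp [K2]
  rw [R1, L1]
  -- commute the sums
  have C1 : ∀ x : G, (∑ y : G, ∑ A : G, ∑ B : G,
      cc (2*j) A B * (if A * B * (x*y*x⁻¹*y⁻¹) = g then (1:ℚ) else 0))
      = ∑ A : G, ∑ B : G, ∑ y : G,
        cc (2*j) A B * (if A * B * (x*y*x⁻¹*y⁻¹) = g then (1:ℚ) else 0) :=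
    fun x => sum_comm3 _
  simp only [C1]
  rw [sum_comm3 (fun x A B => ∑ y : G,
      cc (2*j) A B * (if A * B * (x*y*x⁻¹*y⁻¹) = g then (1:ℚ) else 0))]
  refine sum_congr rfl fun A _ => ?_
  refine sum_congr rfl fun B _ => ?_
  rw [Finset.mul_sum]
  refine sum_congr rfl fun x _ => ?_
  rw [Finset.mul_sum]
  refine sum_congr rfl fun y _ => ?_
  have : (cc (2*j) A B * if A * B * (x*y*x⁻¹*y⁻¹) = g then (1:ℚ) else 0)
      = cc (2*j) A B * (if x*y*x⁻¹*y⁻¹ = (A*B)⁻¹ * g then (1:ℚ) else 0) := by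
    congr 1
    refine if_congr ?_ rfl rfl
    constructor
    · intro h; rw [← h]; group
    · intro h; rw [h]; group
  rw [this]

lemma sum_inv (f : G → ℚ) : ∑ x : G, f x⁻¹ = ∑ x : G, f x :=
  Equiv.sum_comp (Equiv.inv G) f

/-- conjugation invariance of the commutator count -/
lemma K2_conj (z u : G) : K2 (z * u * z⁻¹) = K2 u := by
  unfold K2
  conv_lhs => rw [← sum_conj z
    (fun x => ∑ y : G, if x*y*x⁻¹*y⁻¹ = z*u*z⁻¹ then (1:ℚ) else 0)]
  refine sum_congr rfl fun x _ => ?_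
  conv_lhs => rw [← sum_conj z
    (fun y => if (z*x*z⁻¹)*y*(z*x*z⁻¹)⁻¹*y⁻¹ = z*u*z⁻¹ then (1:ℚ) else 0)]
  refine sum_congr rfl fun y _ => ?_
  refine if_congr ?_ rfl rfl
  have harg : (z*x*z⁻¹)*(z*y*z⁻¹)*(z*x*z⁻¹)⁻¹*(z*y*z⁻¹)⁻¹
      = z*(x*y*x⁻¹*y⁻¹)*z⁻¹ := by group
  rw [harg, mul_left_inj, mul_right_inj]

/-- inversion invariance of the commutator count -/
lemma K2_symm (u : G) : K2 u⁻¹ = K2 u := by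
  unfold K2
  rw [Finset.sum_comm]
  refine sum_congr rfl fun a _ => sum_congr rfl fun b _ => ?_
  refine if_congr ?_ rfl rfl
  rw [show b*a*b⁻¹*a⁻¹ = (a*b*a⁻¹*b⁻¹)⁻¹ by group]
  exact inv_inj

/-- the even solution counts are class functions invariant under inversion -/
lemma Nw_even_conj_inv (j : ℕ) :
    (∀ z g : G, Nw (2*j+2) (z * g * z⁻¹) = Nw (2*j+2) g) ∧
      (∀ g : G, Nw (2*j+2) g⁻¹ = Nw (2*j+2) g) := by
  induction j with
  | zero =>
    constructor
    · intro z g; rw [show 2*0+2 = 2 from rfl, Nw_two, Nw_two, K2_conj]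
    · intro g; rw [show 2*0+2 = 2 from rfl, Nw_two, Nw_two, K2_symm]
  | succ j ih =>
    have hrec : ∀ g : G, Nw (2*(j+1)+2) g = ∑ h : G, Nw (2*j+2) h * K2 (h⁻¹ * g) := by
      intro g
      have := Nw_even_succ (j+1) g
      rw [show 2*(j+1) = 2*j+2 by ring] at this
      rw [show 2*(j+1)+2 = 2*(j+1)+2 from rfl]
      exact this
    constructor
    · intro z g
      rw [hrec, hrec]
      conv_lhs => rw [← sum_conj z (fun h => Nw (2*j+2) h * K2 (h⁻¹ * (z*g*z⁻¹)))]
      refine sum_congr rfl fun h _ => ?_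
      rw [ih.1 z h]
      congr 1
      rw [show (z*h*z⁻¹)⁻¹ * (z*g*z⁻¹) = z*(h⁻¹*g)*z⁻¹ by group, K2_conj]
    · intro g
      rw [hrec, hrec]
      conv_lhs => rw [← sum_inv (fun h => Nw (2*j+2) h * K2 (h⁻¹ * g⁻¹))]
      refine sum_congr rfl fun h _ => ?_
      rw [ih.2 h]
      congr 1
      rw [show h⁻¹⁻¹ * g⁻¹ = (g*h⁻¹)⁻¹ by group, K2_symm,
        show g * h⁻¹ = g * (h⁻¹ * g) * g⁻¹ by group, K2_conj]

lemma sum_mulLeft_inv (y : G) (f : G → ℚ) : ∑ s : G, f (y * s⁻¹) = ∑ b : G, f b := by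
  rw [sum_inv (fun s => f (y * s)), sum_mulLeft]

/-- inner product of two functions on `G` -/
noncomputable def ip (u v : G → ℚ) : ℚ := ∑ x : G, u x * v x

/-- convolution operator -/
noncomputable def cnv (f v : G → ℚ) : G → ℚ := fun x => ∑ y : G, f (x * y⁻¹) * v y

lemma ip_comm (u v : G → ℚ) : ip u v = ip v u := by
  unfold ip; exact sum_congr rfl fun x _ => mul_comm _ _

lemma ip_self_nonneg (u : G → ℚ) : 0 ≤ ip u u :=
  Finset.sum_nonneg fun x _ => mul_self_nonneg _

lemma ip_self_eq_zero {u : G → ℚ} (h : ip u u = 0) : ∀ x : G, u x = 0 := by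
  intro x
  have h2 : ∀ y ∈ (univ : Finset G), 0 ≤ u y * u y := fun y _ => mul_self_nonneg _
  have := (Finset.sum_eq_zero_iff_of_nonneg h2).mp h x (mem_univ x)
  exact mul_self_eq_zero.mp this

/-- self-adjointness of convolution by an inversion-symmetric kernel -/
lemma cnv_selfadj (f : G → ℚ) (hf : ∀ u : G, f u⁻¹ = f u) (u v : G → ℚ) :
    ip (cnv f u) v = ip u (cnv f v) := by
  unfold ip cnv
  have lhs : ∑ x : G, (∑ y : G, f (x * y⁻¹) * u y) * v x
      = ∑ x : G, ∑ y : G, f (x * y⁻¹) * u y * v x := by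
    exact sum_congr rfl fun x _ => by rw [Finset.sum_mul]
  have rhs : ∑ x : G, u x * ∑ y : G, f (x * y⁻¹) * v y
      = ∑ x : G, ∑ y : G, u x * (f (x * y⁻¹) * v y) := by
    exact sum_congr rfl fun x _ => by rw [Finset.mul_sum]
  rw [lhs, rhs, Finset.sum_comm]
  refine sum_congr rfl fun x _ => sum_congr rfl fun y _ => ?_
  have : f (y * x⁻¹) = f (x * y⁻¹) := by
    rw [show y * x⁻¹ = (x * y⁻¹)⁻¹ by group, hf]
  rw [this]; ring

/-- associativity of convolution -/
lemma cnv_assoc (f h v : G → ℚ) : cnv f (cnv h v) = cnv (cnv f h) v := by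
  funext x
  unfold cnv
  have lhs : ∑ y : G, f (x * y⁻¹) * ∑ z : G, h (y * z⁻¹) * v z
      = ∑ y : G, ∑ z : G, f (x * y⁻¹) * h (y * z⁻¹) * v z := by
    refine sum_congr rfl fun y _ => ?_
    rw [Finset.mul_sum]
    exact sum_congr rfl fun z _ => by ring
  have rhs : ∑ z : G, (∑ w : G, f (x * z⁻¹ * w⁻¹) * h w) * v z
      = ∑ z : G, ∑ w : G, f (x * z⁻¹ * w⁻¹) * h w * v z := by
    exact sum_congr rfl fun z _ => by rw [Finset.sum_mul]
  rw [lhs, rhs, Finset.sum_comm]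
  refine sum_congr rfl fun z _ => ?_
  rw [← sum_mulRight z⁻¹ (fun w => f (x * z⁻¹ * w⁻¹) * h w * v z)]
  refine sum_congr rfl fun y _ => ?_
  congr 2
  congr 1
  group

/-- the crucial positivity: the commutator count is a positive-definite kernel -/
lemma qK2_nonneg (v : G → ℚ) : 0 ≤ ip v (cnv K2 v) := by
  -- first rewrite the quadratic form as a triple sum
  have E1 : ip v (cnv K2 v) = ∑ y : G, ∑ s : G, ∑ x : G, v (x*y*x⁻¹*s⁻¹) * v (y*s⁻¹) := by
    unfold ip cnv K2
    have e1 : ∀ a : G, v a * (∑ b : G, (∑ x : G, ∑ y : G,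
        if x*y*x⁻¹*y⁻¹ = a * b⁻¹ then (1:ℚ) else 0) * v b)
        = ∑ b : G, ∑ x : G, ∑ y : G,
            (if x*y*x⁻¹*y⁻¹ = a * b⁻¹ then v a * v b else 0) := by
      intro a
      rw [Finset.mul_sum]
      refine sum_congr rfl fun b _ => ?_
      rw [Finset.sum_mul, Finset.mul_sum]
      refine sum_congr rfl fun x _ => ?_
      rw [Finset.sum_mul, Finset.mul_sum]
      refine sum_congr rfl fun y _ => ?_
      by_cases hc : x*y*x⁻¹*y⁻¹ = a * b⁻¹ <;> simp [hc]
    simp only [e1]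
    -- move the a-sum innermost
    rw [sum_comm3 (fun a b x => ∑ y : G,
      if x*y*x⁻¹*y⁻¹ = a * b⁻¹ then v a * v b else 0)]
    have e2 : ∀ b x : G, (∑ a : G, ∑ y : G,
        if x*y*x⁻¹*y⁻¹ = a * b⁻¹ then v a * v b else 0)
        = ∑ y : G, v (x*y*x⁻¹*y⁻¹*b) * v b := by
      intro b x
      rw [Finset.sum_comm]
      refine sum_congr rfl fun y _ => ?_
      have e3 : ∀ a : G, (if x*y*x⁻¹*y⁻¹ = a * b⁻¹ then v a * v b else 0)
          = if a = x*y*x⁻¹*y⁻¹*b then v a * v b else 0 := by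
        intro a
        refine if_congr ?_ rfl rfl
        constructor
        · intro hh; rw [hh]; group
        · intro hh; rw [hh]; group
      simp only [e3]
      rw [Finset.sum_ite_eq' univ (x*y*x⁻¹*y⁻¹*b) (fun a => v a * v b)]
      simp
    simp only [e2]
    -- move the b-sum innermost
    rw [sum_comm3 (fun b x y => v (x*y*x⁻¹*y⁻¹*b) * v b)]
    -- substitute b = y * s⁻¹
    have e4 : ∀ x y : G, (∑ b : G, v (x*y*x⁻¹*y⁻¹*b) * v b)
        = ∑ s : G, v (x*y*x⁻¹*s⁻¹) * v (y*s⁻¹) := by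
      intro x y
      rw [← sum_mulLeft_inv y (fun b => v (x*y*x⁻¹*y⁻¹*b) * v b)]
      refine sum_congr rfl fun s _ => ?_
      congr 2
      group
    simp only [e4]
    exact sum_comm3 (fun x y s => v (x*y*x⁻¹*s⁻¹) * v (y*s⁻¹))
  -- now multiply by |G| and complete the square
  have E2 : (Fintype.card G : ℚ) * ip v (cnv K2 v)
      = ∑ y : G, ∑ s : G,
          (∑ x : G, v (x*y*x⁻¹*s⁻¹)) * (∑ x : G, v (x*y*x⁻¹*s⁻¹)) := by
    rw [E1]
    rw [show (Fintype.card G : ℚ) * (∑ y : G, ∑ s : G, ∑ x : G, v (x*y*x⁻¹*s⁻¹) * v (y*s⁻¹))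
        = ∑ x1 : G, ∑ y : G, ∑ s : G, ∑ x : G, v (x*y*x⁻¹*s⁻¹) * v (y*s⁻¹) by
      rw [Finset.sum_const, card_univ, nsmul_eq_mul]]
    have e5 : ∀ x1 : G, (∑ y : G, ∑ s : G, ∑ x : G, v (x*y*x⁻¹*s⁻¹) * v (y*s⁻¹))
        = ∑ y : G, ∑ s : G, (∑ x : G, v (x*y*x⁻¹*s⁻¹)) * v (x1*y*x1⁻¹*s⁻¹) := by
      intro x1
      rw [← sum_conj x1 (fun y => ∑ s : G, ∑ x : G, v (x*y*x⁻¹*s⁻¹) * v (y*s⁻¹))]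
      refine sum_congr rfl fun y _ => ?_
      refine sum_congr rfl fun s _ => ?_
      rw [Finset.sum_mul]
      rw [← sum_mulRight x1⁻¹
        (fun x => v (x*(x1*y*x1⁻¹)*x⁻¹*s⁻¹) * v (x1*y*x1⁻¹*s⁻¹))]
      refine sum_congr rfl fun x _ => ?_
      congr 2
      group
    rw [show (∑ x1 : G, ∑ y : G, ∑ s : G, ∑ x : G, v (x*y*x⁻¹*s⁻¹) * v (y*s⁻¹))
        = ∑ x1 : G, ∑ y : G, ∑ s : G, (∑ x : G, v (x*y*x⁻¹*s⁻¹)) * v (x1*y*x1⁻¹*s⁻¹) from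
      sum_congr rfl fun x1 _ => e5 x1]
    rw [sum_comm3 (fun x1 y s => (∑ x : G, v (x*y*x⁻¹*s⁻¹)) * v (x1*y*x1⁻¹*s⁻¹))]
    refine sum_congr rfl fun y _ => ?_
    refine sum_congr rfl fun s _ => ?_
    rw [← Finset.mul_sum]
  have hcard : (0:ℚ) < (Fintype.card G : ℚ) := by
    exact_mod_cast Fintype.card_pos
  have hnn : 0 ≤ (Fintype.card G : ℚ) * ip v (cnv K2 v) := by
    rw [E2]
    refine Finset.sum_nonneg fun y _ => Finset.sum_nonneg fun s _ => mul_self_nonneg _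
  by_contra hcon
  push_neg at hcon
  have : (Fintype.card G : ℚ) * ip v (cnv K2 v) < 0 := mul_neg_of_pos_of_neg hcard hcon
  linarith

lemma ip_shift (a : ℕ) (u v : G → ℚ) :
    ∀ b : ℕ, ip ((cnv K2)^[a] u) ((cnv K2)^[b] v) = ip u ((cnv K2)^[a+b] v) := by
  induction a with
  | zero => intro b; rw [Function.iterate_zero_apply, Nat.zero_add]
  | succ a ih =>
    intro b
    rw [Function.iterate_succ_apply' (cnv K2) a u]
    rw [cnv_selfadj K2 K2_symm]
    rw [← Function.iterate_succ_apply' (cnv K2) b v]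
    rw [ih (b+1)]
    rw [show a + 1 + b = a + (b+1) by omega]

lemma cnv_iterate (k : ℕ) (v : G → ℚ) :
    (cnv K2)^[k+1] v = cnv ((cnv K2)^[k] K2) v := by
  induction k with
  | zero => rfl
  | succ k ih =>
    rw [Function.iterate_succ_apply' (cnv K2) (k+1) v, ih, cnv_assoc,
      ← Function.iterate_succ_apply' (cnv K2) k K2]

lemma Nw_even_eq_iter (j : ℕ) : (fun g : G => Nw (2*j+2) g) = (cnv K2)^[j] K2 := by
  induction j with
  | zero =>
    funext g
    rw [Function.iterate_zero_apply]
    exact Nw_two g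
  | succ j ih =>
    funext g
    have h := Nw_even_succ (j+1) g
    rw [show 2*(j+1) = 2*j+2 by ring] at h
    rw [show 2*(j+1)+2 = 2*j+2+2 by ring, h]
    have e : ∀ hh : G, Nw (2*j+2) hh * K2 (hh⁻¹ * g) = K2 (g * hh⁻¹) * Nw (2*j+2) hh := by
      intro hh
      rw [mul_comm]
      congr 1
      rw [show hh⁻¹ * g = hh⁻¹ * (g * hh⁻¹) * hh⁻¹⁻¹ by group, K2_conj]
    rw [sum_congr rfl fun hh _ => e hh]
    rw [Function.iterate_succ_apply', ← ih]
    rfl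

/-- kernel of the quadratic form is the kernel of the operator -/
lemma psd_kernel (u : G → ℚ) (h : ip u (cnv K2 u) = 0) : ∀ x : G, cnv K2 u x = 0 := by
  set w := cnv K2 u with hw
  set a := ip w w with hadef
  set b := ip w (cnv K2 w) with hbdef
  have hb : 0 ≤ b := qK2_nonneg w
  have ha0 : 0 ≤ a := ip_self_nonneg w
  have key : ∀ t : ℚ, 0 ≤ 2*t*a + t^2*b := by
    intro t
    have h0 := qK2_nonneg (fun x => u x + t * w x)
    have hc : ∀ x : G, cnv K2 (fun z => u z + t * w z) x = cnv K2 u x + t * cnv K2 w x := by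
      intro x
      unfold cnv
      have e : ∀ y : G, K2 (x * y⁻¹) * (u y + t * w y)
          = K2 (x * y⁻¹) * u y + t * (K2 (x * y⁻¹) * w y) := fun y => by ring
      rw [sum_congr rfl fun y _ => e y, Finset.sum_add_distrib, ← Finset.mul_sum]
    have hexp : ip (fun x => u x + t * w x) (cnv K2 (fun z => u z + t * w z))
        = ip u (cnv K2 u) + t * ip u (cnv K2 w) + t * ip w (cnv K2 u) + t^2 * ip w (cnv K2 w) := by
      unfold ip
      rw [Finset.mul_sum, Finset.mul_sum, Finset.mul_sum, ← Finset.sum_add_distrib,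
        ← Finset.sum_add_distrib, ← Finset.sum_add_distrib]
      refine sum_congr rfl fun x _ => ?_
      rw [hc x]
      ring
    rw [hexp] at h0
    have h1 : ip u (cnv K2 w) = a := by
      rw [← cnv_selfadj K2 K2_symm u w, ← hw, ← hadef]
    have h2 : ip w (cnv K2 u) = a := by rw [← hw, ← hadef]
    rw [h, h1, h2, ← hbdef] at h0
    linarith
  have ha : a = 0 := by
    by_contra hne
    have hapos : 0 < a := lt_of_le_of_ne ha0 (Ne.symm hne)
    have hb1 : (0:ℚ) < b + 1 := by linarith
    have key' := key (-(a/(b+1)))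
    have hcomp : 2*(-(a/(b+1)))*a + (-(a/(b+1)))^2*b = -(a^2*(b+2))/(b+1)^2 := by
      field_simp
      ring
    rw [hcomp] at key'
    have hnum : 0 < a^2*(b+2) := by nlinarith
    have : -(a^2*(b+2))/(b+1)^2 < 0 := by
      apply div_neg_of_neg_of_pos
      · linarith
      · positivity
    linarith
  have : ip w w = 0 := by rw [← hadef]; exact ha
  exact ip_self_eq_zero this

/-- descent: vanishing of any iterated quadratic form kills the operator -/
lemma descent : ∀ k : ℕ, 1 ≤ k → ∀ u : G → ℚ,
    ip u ((cnv K2)^[k] u) = 0 → ∀ x : G, cnv K2 u x = 0 := by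
  intro k
  induction k using Nat.strong_induction_on with
  | _ k IH =>
    intro hk u hu
    rcases Nat.even_or_odd k with ⟨r, hr⟩ | ⟨r, hr⟩
    · have hr1 : 1 ≤ r := by omega
      rw [hr, ← ip_shift r u u r] at hu
      have hz := ip_self_eq_zero hu
      have hnext : ip u ((cnv K2)^[r] u) = 0 := by
        unfold ip
        exact Finset.sum_eq_zero fun x _ => by rw [hz x, mul_zero]
      exact IH r (by omega) hr1 u hnext
    · rcases Nat.eq_zero_or_pos r with hr0 | hrpos
      · rw [hr, hr0] at hu
        norm_num at hu
        exact psd_kernel u hu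
      · rw [hr, show 2*r+1 = r + (r+1) by omega, ← ip_shift r u u (r+1),
          Function.iterate_succ_apply' (cnv K2) r u] at hu
        have hz := psd_kernel ((cnv K2)^[r] u) hu
        have hnext : ip u ((cnv K2)^[r+1] u) = 0 := by
          unfold ip
          refine Finset.sum_eq_zero fun x _ => ?_
          rw [Function.iterate_succ_apply' (cnv K2) r u, hz x, mul_zero]
        exact IH (r+1) (by omega) (by omega) u hnext

/-- strictness for the commutator count -/
lemma K2_strict {g : G} (hg : g ≠ 1) : K2 g < K2 (1 : G) := by
  classical
  set I : G → G → ℚ := fun u y => ∑ x : G, if x*y*x⁻¹ = u*y then (1:ℚ) else 0 with hI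
  have hK : ∀ u : G, K2 u = ∑ y : G, I u y := by
    intro u
    unfold K2
    rw [Finset.sum_comm]
    refine sum_congr rfl fun y _ => sum_congr rfl fun x _ => ?_
    refine if_congr ?_ rfl rfl
    constructor
    · intro h; rw [show x*y*x⁻¹ = x*y*x⁻¹*y⁻¹*y by group, h]
    · intro h; rw [show x*y*x⁻¹*y⁻¹ = (x*y*x⁻¹)*y⁻¹ by group, h]; group
  have hIle : ∀ u y : G, I u y ≤ I 1 y := by
    intro u y
    by_cases hex : ∃ x0 : G, x0*y*x0⁻¹ = u*y
    · obtain ⟨x0, hx0⟩ := hex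
      have : I u y = I 1 y := by
        rw [hI]
        simp only
        rw [← sum_mulLeft x0 (fun x => if x*y*x⁻¹ = u*y then (1:ℚ) else 0)]
        refine sum_congr rfl fun c _ => ?_
        refine if_congr ?_ rfl rfl
        rw [← hx0]
        constructor
        · intro h
          have h2 : x0 * (c*y*c⁻¹) * x0⁻¹ = x0*y*x0⁻¹ := by
            rw [show x0 * (c*y*c⁻¹) * x0⁻¹ = (x0*c)*y*(x0*c)⁻¹ by group, h]
          have h3 := mul_left_cancel (mul_right_cancel h2)
          rw [h3]
          group
        · intro h
          rw [show x0*c*y*(x0*c)⁻¹ = x0*(c*y*c⁻¹)*x0⁻¹ by group, h]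
          group
      exact le_of_eq this
    · push_neg at hex
      have hz : I u y = 0 := by
        rw [hI]
        simp only
        refine Finset.sum_eq_zero fun x _ => ?_
        rw [if_neg (hex x)]
      rw [hz]
      exact Finset.sum_nonneg fun x _ => by positivity
  have hI1g : I g 1 = 0 := by
    rw [hI]
    simp only
    refine Finset.sum_eq_zero fun x _ => ?_
    rw [if_neg]
    intro hcon
    apply hg
    have : (1:G) = g := by rw [show (1:G) = x*1*x⁻¹ by group, hcon]; group
    exact this.symm
  have hI11 : I 1 1 = (Fintype.card G : ℚ) := by
    rw [hI]
    simp only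
    rw [Finset.sum_congr rfl (fun x _ => if_pos (by group))]
    rw [Finset.sum_const, card_univ, nsmul_eq_mul, mul_one]
  have hcard : (0:ℚ) < (Fintype.card G : ℚ) := by exact_mod_cast Fintype.card_pos
  have hsplitg : K2 g = I g 1 + ∑ y ∈ univ.erase 1, I g y := by
    rw [hK g, ← Finset.add_sum_erase univ (I g) (mem_univ 1)]
  have hsplit1 : K2 (1:G) = I 1 1 + ∑ y ∈ univ.erase 1, I 1 y := by
    rw [hK (1:G), ← Finset.add_sum_erase univ (I 1) (mem_univ (1:G))]
  have hle : ∑ y ∈ univ.erase 1, I g y ≤ ∑ y ∈ univ.erase 1, I 1 y :=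
    Finset.sum_le_sum fun y _ => hIle g y
  rw [hsplitg, hsplit1, hI1g, hI11]
  linarith

/-- main result for even length -/
lemma even_main (j : ℕ) (g : G) :
    Nw (2*j+2) g ≤ Nw (2*j+2) (1:G) ∧ (Nw (2*j+2) g = Nw (2*j+2) (1:G) → g = 1) := by
  set w : G → ℚ := fun x => (if x = 1 then (1:ℚ) else 0) - (if x = g then 1 else 0) with hwdef
  have hconv : ∀ f : G → ℚ, cnv f w = fun x => f x - f (x * g⁻¹) := by
    intro f
    funext x
    unfold cnv
    rw [hwdef]
    have e : ∀ y : G, f (x * y⁻¹) * ((if y = 1 then (1:ℚ) else 0) - (if y = g then 1 else 0))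
        = (if y = 1 then f (x * y⁻¹) else 0) - (if y = g then f (x * y⁻¹) else 0) := by
      intro y
      by_cases h1 : y = 1 <;> by_cases h2 : y = g <;> simp [h1, h2] <;> split_ifs <;> ring
    rw [sum_congr rfl fun y _ => e y, Finset.sum_sub_distrib,
      Finset.sum_ite_eq' univ (1:G) (fun y => f (x * y⁻¹)),
      Finset.sum_ite_eq' univ g (fun y => f (x * y⁻¹))]
    simp
  have hiter : (cnv K2)^[j+1] w = cnv (fun u => Nw (2*j+2) u) w := by
    rw [cnv_iterate j w, ← Nw_even_eq_iter j]
  have hq : ip w ((cnv K2)^[j+1] w) = 2 * (Nw (2*j+2) (1:G) - Nw (2*j+2) g) := by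
    rw [hiter, hconv]
    unfold ip
    rw [hwdef]
    have e : ∀ x : G, ((if x = 1 then (1:ℚ) else 0) - (if x = g then 1 else 0))
        * (Nw (2*j+2) x - Nw (2*j+2) (x * g⁻¹))
        = (if x = 1 then Nw (2*j+2) x - Nw (2*j+2) (x * g⁻¹) else 0)
          - (if x = g then Nw (2*j+2) x - Nw (2*j+2) (x * g⁻¹) else 0) := by
      intro x
      by_cases h1 : x = 1 <;> by_cases h2 : x = g <;> simp [h1, h2] <;> split_ifs <;> ring
    rw [sum_congr rfl fun x _ => e x, Finset.sum_sub_distrib,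
      Finset.sum_ite_eq' univ (1:G) (fun x => Nw (2*j+2) x - Nw (2*j+2) (x * g⁻¹)),
      Finset.sum_ite_eq' univ g (fun x => Nw (2*j+2) x - Nw (2*j+2) (x * g⁻¹))]
    simp only [mem_univ, if_true, one_mul, mul_inv_cancel]
    rw [(Nw_even_conj_inv j).2 g]
    ring
  have hpos : 0 ≤ ip w ((cnv K2)^[j+1] w) := by
    rcases Nat.even_or_odd (j+1) with ⟨r, hr⟩ | ⟨r, hr⟩
    · rw [hr, ← ip_shift r w w r]
      exact ip_self_nonneg _
    · rw [hr, show 2*r+1 = r + (r+1) by omega, ← ip_shift r w w (r+1),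
        Function.iterate_succ_apply' (cnv K2) r w]
      exact qK2_nonneg _
  constructor
  · rw [hq] at hpos
    linarith
  · intro heq
    have hzero : ip w ((cnv K2)^[j+1] w) = 0 := by rw [hq, heq]; ring
    have hker := descent (j+1) (by omega) w hzero g
    have hcg : cnv K2 w g = K2 g - K2 (g * g⁻¹) := by rw [hconv K2]
    rw [hcg, mul_inv_cancel] at hker
    by_contra hne
    have := K2_strict hne
    linarith [sub_eq_zero.mp hker]

/-- main counting result -/
lemma Nw_main (n : ℕ) (hn : 2 ≤ n) (g : G) :
    Nw n g ≤ Nw n (1:G) ∧ (Nw n g = Nw n (1:G) ↔ g = 1) := by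
  have hcard : (0:ℚ) < (Fintype.card G : ℚ) := by exact_mod_cast Fintype.card_pos
  rcases Nat.even_or_odd n with ⟨r, hr⟩ | ⟨r, hr⟩
  · obtain ⟨j, hj⟩ : ∃ j, n = 2*j+2 := ⟨r-1, by omega⟩
    subst hj
    obtain ⟨h1, h2⟩ := even_main j g
    exact ⟨h1, ⟨h2, fun h => by rw [h]⟩⟩
  · have hr1 : 1 ≤ r := by omega
    obtain ⟨j, hj⟩ : ∃ j, r = j+1 := ⟨r-1, by omega⟩
    have hodd : ∀ u : G, Nw n u = (Fintype.card G : ℚ) * Nw (2*r) u := by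
      intro u
      rw [hr, Nw_odd r u]
    obtain ⟨h1, h2⟩ := even_main j g
    have h2r : 2*r = 2*j+2 := by omega
    constructor
    · rw [hodd g, hodd 1, h2r]
      exact mul_le_mul_of_nonneg_left h1 (le_of_lt hcard)
    · constructor
      · intro h
        rw [hodd g, hodd 1, h2r] at h
        exact h2 (mul_left_cancel₀ (ne_of_gt hcard) h)
      · intro h; rw [h]


lemma prWord_eq (n : ℕ) (g : G) :
    prWord G n g = Nw n g / (Fintype.card G : ℚ) ^ n := by
  unfold prWord
  congr 1
  · rw [Nat.card_eq_fintype_card, Fintype.card_subtype, Finset.card_filter]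
    push_cast
    rfl
  · rw [Nat.card_eq_fintype_card]

end PrWordAux

theorem prWord_le_prWord_one (G : Type*) [Group G] [Fintype G] (n : ℕ) (hn : 2 ≤ n)
    (g : G) (hg : g ∈ commutator G) :
    prWord G n g ≤ prWord G n 1 ∧ (prWord G n g = prWord G n 1 ↔ g = 1) := by
  obtain ⟨h1, h2⟩ := PrWordAux.Nw_main n hn g
  have hc : (0:ℚ) < (Fintype.card G : ℚ) := by exact_mod_cast Fintype.card_pos
  have hD : (0:ℚ) < (Fintype.card G : ℚ) ^ n := pow_pos hc n
  rw [PrWordAux.prWord_eq n g, PrWordAux.prWord_eq n 1]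
  constructor
  · exact (div_le_div_iff_of_pos_right hD).mpr h1
  · constructor
    · intro h
      have h' := (div_eq_div_iff hD.ne' hD.ne').mp h
      exact h2.mp (mul_right_cancel₀ hD.ne' h')
    · intro h
      rw [h]
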